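/- If a sequence of commuting d-tuples of N×N complex matrices (A_{n,1},...,A_{n,d}) converges (entrywise) to a commuting tuple (A_1,...,A_d), and (λ_1,...,λ_d) is a joint eigenvalue of (A_1,...,A_d) (i.e., there is a nonzero vector v with A_j v = λ_j v for all j), then there exist a strictly increasing sequence n_k of natural numbers and joint eigenvalues (λ_{n_k,1},...,λ_{n_k,d}) of (A_{n_k,1},...,A_{n_k,d}) with λ_{n_k,j} → λ_j as k → ∞ for each j. -/

import Mathlib

open Matrix Filter Topology

theorem jointEig : ∀ (dd : ℕ) (V : Type) (_ : AddCommGroup V) (_ : Module ℂ V)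
    (_ : FiniteDimensional ℂ V) (_ : Nontrivial V)
    (f : Fin dd → Module.End ℂ V), (∀ i j, Commute (f i) (f j)) →
    ∃ (μ : Fin dd → ℂ) (v : V), v ≠ 0 ∧ ∀ i, f i v = μ i • v := by
  intro dd
  induction dd with
  | zero =>
    intro V _ _ _ _ f hf
    obtain ⟨v, hv⟩ := exists_ne (0 : V)
    exact ⟨finZeroElim, v, hv, fun i => i.elim0⟩
  | succ n ih =>
    intro V _ _ _ _ f hf
    obtain ⟨μ0, hμ0⟩ := Module.End.exists_eigenvalue (f (Fin.last n))
    set E := Module.End.eigenspace (f (Fin.last n)) μ0 with hE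
    have hEbot : E ≠ ⊥ := hμ0
    have : Nontrivial E := Submodule.nontrivial_iff_ne_bot.mpr hEbot
    have hmaps : ∀ i : Fin n, Set.MapsTo (f i.castSucc) E E := by
      intro i x hx
      have hx' : f (Fin.last n) x = μ0 • x := Module.End.mem_eigenspace_iff.mp hx
      refine Module.End.mem_eigenspace_iff.mpr ?_
      have hcomm : f (Fin.last n) (f i.castSucc x) = f i.castSucc (f (Fin.last n) x) := by
        have h := hf (Fin.last n) i.castSucc
        have := congrArg (fun (g : Module.End ℂ V) => g x) h
        simpa [Module.End.mul_apply] using this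
      rw [hcomm, hx', _root_.map_smul]
    set g : Fin n → Module.End ℂ E := fun i => (f i.castSucc).restrict (hmaps i) with hg
    have hgc : ∀ i j, Commute (g i) (g j) := by
      intro i j
      ext x
      have h := hf i.castSucc j.castSucc
      have := congrArg (fun (g : Module.End ℂ V) => g (x : V)) h
      simp only [Module.End.mul_apply] at this
      simp only [Module.End.mul_apply, hg, LinearMap.restrict_coe_apply]
      exact this
    obtain ⟨μ, v, hv0, hv⟩ := ih E inferInstance inferInstance inferInstance inferInstance g hgc
    refine ⟨Fin.lastCases μ0 μ, (v : V), by simpa using hv0, ?_⟩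
    intro i
    refine Fin.lastCases ?_ ?_ i
    · have := Module.End.mem_eigenspace_iff.mp v.2
      simpa using this
    · intro i
      have := congrArg (Subtype.val) (hv i)
      simp only [Fin.lastCases_castSucc]
      exact this

def lift1 {N : ℕ} (V : Matrix (Fin N) (Fin N) ℂ) : Matrix (Fin (N+1)) (Fin (N+1)) ℂ :=
  Matrix.of fun i k =>
    if hi : i = 0 then (if k = 0 then 1 else 0)
    else if hk : k = 0 then 0 else V (i.pred hi) (k.pred hk)

@[simp] lemma lift1_zero_zero {N : ℕ} (V : Matrix (Fin N) (Fin N) ℂ) : lift1 V 0 0 = 1 := by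
  simp [lift1]

@[simp] lemma lift1_zero_succ {N : ℕ} (V : Matrix (Fin N) (Fin N) ℂ) (k : Fin N) :
    lift1 V 0 k.succ = 0 := by
  simp [lift1, Fin.succ_ne_zero]

@[simp] lemma lift1_succ_zero {N : ℕ} (V : Matrix (Fin N) (Fin N) ℂ) (i : Fin N) :
    lift1 V i.succ 0 = 0 := by
  simp [lift1, Fin.succ_ne_zero]

@[simp] lemma lift1_succ_succ {N : ℕ} (V : Matrix (Fin N) (Fin N) ℂ) (i k : Fin N) :
    lift1 V i.succ k.succ = V i k := by
  simp [lift1, Fin.succ_ne_zero]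

lemma lift1_mul {N : ℕ} (V W : Matrix (Fin N) (Fin N) ℂ) :
    lift1 V * lift1 W = lift1 (V * W) := by
  ext i k
  refine Fin.cases ?_ (fun i => ?_) i <;> refine Fin.cases ?_ (fun k => ?_) k <;>
    simp [Matrix.mul_apply, Fin.sum_univ_succ]

lemma lift1_conjTranspose {N : ℕ} (V : Matrix (Fin N) (Fin N) ℂ) :
    (lift1 V)ᴴ = lift1 Vᴴ := by
  ext i k
  refine Fin.cases ?_ (fun i => ?_) i <;> refine Fin.cases ?_ (fun k => ?_) k <;>
    simp [Matrix.conjTranspose_apply]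

lemma lift1_one {N : ℕ} : lift1 (1 : Matrix (Fin N) (Fin N) ℂ) = 1 := by
  ext i k
  refine Fin.cases ?_ (fun i => ?_) i <;> refine Fin.cases ?_ (fun k => ?_) k <;>
    simp [Matrix.one_apply, Fin.succ_inj, Fin.succ_ne_zero, (Fin.succ_ne_zero _).symm,
      Ne.symm (Fin.succ_ne_zero _)]

lemma conj_lift_succ_succ {N : ℕ} (V : Matrix (Fin N) (Fin N) ℂ)
    (M : Matrix (Fin (N+1)) (Fin (N+1)) ℂ) (p q : Fin N) :
    ((lift1 V)ᴴ * M * (lift1 V)) p.succ q.succ =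
      (Vᴴ * M.submatrix Fin.succ Fin.succ * V) p q := by
  simp [Matrix.mul_apply, Fin.sum_univ_succ, Matrix.conjTranspose_apply]

lemma conj_lift_succ_zero {N : ℕ} (V : Matrix (Fin N) (Fin N) ℂ)
    (M : Matrix (Fin (N+1)) (Fin (N+1)) ℂ) (p : Fin N)
    (h : ∀ r : Fin N, M r.succ 0 = 0) :
    ((lift1 V)ᴴ * M * (lift1 V)) p.succ 0 = 0 := by
  simp [Matrix.mul_apply, Fin.sum_univ_succ, Matrix.conjTranspose_apply, h]

theorem simTriang : ∀ (N d : ℕ) (C : Fin d → Matrix (Fin N) (Fin N) ℂ),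
    (∀ i j, Commute (C i) (C j)) →
    ∃ U : Matrix (Fin N) (Fin N) ℂ, star U * U = 1 ∧ U * star U = 1 ∧
      ∀ j, ∀ p q : Fin N, q < p → (star U * C j * U) p q = 0 := by
  intro N
  induction N with
  | zero =>
    intro d C _
    refine ⟨1, by simp, by simp, fun j p q _ => p.elim0⟩
  | succ N ih =>
    intro d C hC
    obtain ⟨μ, v, hv0, hv⟩ := jointEig d (Fin (N+1) → ℂ) inferInstance inferInstance
      inferInstance inferInstance (fun j => Matrix.mulVecLin (C j)) (by
        intro i j
        show (C i).mulVecLin * (C j).mulVecLin = (C j).mulVecLin * (C i).mulVecLin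
        rw [Module.End.mul_eq_comp, Module.End.mul_eq_comp, ← Matrix.mulVecLin_mul,
          ← Matrix.mulVecLin_mul, (hC i j).eq])
    have hv' : ∀ j, C j *ᵥ v = μ j • v := by
      intro j; simpa [Matrix.mulVecLin_apply] using hv j
    set x : EuclideanSpace ℂ (Fin (N+1)) := WithLp.toLp 2 v with hx
    have hx0 : x ≠ 0 := by simpa [hx] using hv0
    set c : ℂ := ((‖x‖ : ℝ) : ℂ)⁻¹ with hc
    set u : EuclideanSpace ℂ (Fin (N+1)) := c • x with hu
    have hnu : ‖u‖ = 1 := by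
      rw [hu, norm_smul, hc, norm_inv, Complex.norm_real, norm_norm]
      field_simp [norm_ne_zero_iff.mpr hx0]
    have huv : ∀ j, C j *ᵥ (u : Fin (N+1) → ℂ) = μ j • (u : Fin (N+1) → ℂ) := by
      intro j
      have h1 : C j *ᵥ (c • v) = c • (C j *ᵥ v) := Matrix.mulVec_smul _ _ _
      show C j *ᵥ (c • v) = μ j • (c • v)
      rw [h1, hv' j, smul_comm]
    have horth : Orthonormal ℂ (Set.restrict ({0} : Set (Fin (N+1))) (fun _ => u)) := by
      constructor
      · intro i
        exact hnu
      · intro i j hij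
        exact absurd (Subsingleton.elim i j) hij
    obtain ⟨b, hb⟩ := horth.exists_orthonormalBasis_extension_of_card_eq (by simp)
    have hb0 : b 0 = u := hb 0 rfl
    set U₁ : Matrix (Fin (N+1)) (Fin (N+1)) ℂ :=
      (EuclideanSpace.basisFun (Fin (N+1)) ℂ).toBasis.toMatrix ⇑b with hU₁
    have hU₁apply : ∀ p q, U₁ p q = b q p := by
      intro p q
      rw [hU₁, Module.Basis.toMatrix_apply]
      rfl
    have hU₁l : star U₁ * U₁ = 1 := by
      rw [hU₁, Matrix.star_eq_conjTranspose]
      exact OrthonormalBasis.toMatrix_orthonormalBasis_conjTranspose_mul_self _ b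
    have hU₁r : U₁ * star U₁ = 1 := by
      rw [hU₁, Matrix.star_eq_conjTranspose]
      exact OrthonormalBasis.toMatrix_orthonormalBasis_self_mul_conjTranspose _ b
    set M : Fin d → Matrix (Fin (N+1)) (Fin (N+1)) ℂ := fun j => star U₁ * C j * U₁ with hM
    have e2 : (fun r => U₁ r 0) = (u : Fin (N+1) → ℂ) := by
      funext r; rw [hU₁apply, hb0]
    have hMcol : ∀ j p, M j p 0 = if p = 0 then μ j else 0 := by
      intro j p
      have e1 : M j p 0 = ((star U₁ * C j) *ᵥ fun r => U₁ r 0) p := by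
        simp [hM, Matrix.mul_apply, Matrix.mulVec, dotProduct]
      have e3 : ((star U₁) *ᵥ (u : Fin (N+1) → ℂ)) p
          = (1 : Matrix (Fin (N+1)) (Fin (N+1)) ℂ) p 0 := by
        rw [← hU₁l, ← e2]
        simp [Matrix.mul_apply, Matrix.mulVec, dotProduct]
      rw [e1, e2, ← Matrix.mulVec_mulVec, huv j, Matrix.mulVec_smul, Pi.smul_apply, e3,
        Matrix.one_apply]
      by_cases hp : p = 0 <;> simp [hp]
    set D : Fin d → Matrix (Fin N) (Fin N) ℂ := fun j => (M j).submatrix Fin.succ Fin.succ with hD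
    have hMmul : ∀ i j, M i * M j = star U₁ * (C i * C j) * U₁ := by
      intro i j
      simp only [hM]
      have h1 : U₁ * (star U₁ * (C j * U₁)) = C j * U₁ := by
        rw [← Matrix.mul_assoc, hU₁r, Matrix.one_mul]
      simp only [Matrix.mul_assoc]
      rw [h1]
    have hDkey : ∀ i j, D i * D j = (M i * M j).submatrix Fin.succ Fin.succ := by
      intro i j
      ext p q
      simp only [Matrix.mul_apply, Matrix.submatrix_apply, hD]
      rw [Fin.sum_univ_succ, hMcol, if_neg (Fin.succ_ne_zero p), zero_mul, zero_add]
    have hDcomm : ∀ i j, Commute (D i) (D j) := by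
      intro i j
      show D i * D j = D j * D i
      rw [hDkey, hDkey, hMmul, hMmul, (hC i j).eq]
    obtain ⟨V, hV1, hV2, hVt⟩ := ih d D hDcomm
    set U : Matrix (Fin (N+1)) (Fin (N+1)) ℂ := U₁ * lift1 V with hUdef
    have hstarlift : star (lift1 V) = lift1 (star V) := by
      rw [Matrix.star_eq_conjTranspose, lift1_conjTranspose, Matrix.star_eq_conjTranspose]
    have hUl : star U * U = 1 := by
      rw [hUdef, StarMul.star_mul]
      calc star (lift1 V) * star U₁ * (U₁ * lift1 V)
          = star (lift1 V) * ((star U₁ * U₁) * lift1 V) := by simp only [Matrix.mul_assoc]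
        _ = 1 := by rw [hU₁l, Matrix.one_mul, hstarlift, lift1_mul, hV1, lift1_one]
    have hUr : U * star U = 1 := by
      rw [hUdef, StarMul.star_mul]
      calc U₁ * lift1 V * (star (lift1 V) * star U₁)
          = U₁ * ((lift1 V * star (lift1 V)) * star U₁) := by simp only [Matrix.mul_assoc]
        _ = 1 := by rw [hstarlift, lift1_mul, hV2, lift1_one, Matrix.one_mul, hU₁r]
    refine ⟨U, hUl, hUr, ?_⟩
    intro j p q hlt
    have hR : star U * C j * U = (lift1 V)ᴴ * M j * lift1 V := by
      rw [hUdef, StarMul.star_mul, hM]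
      simp only [Matrix.mul_assoc, Matrix.star_eq_conjTranspose]
    rw [hR]
    rcases Fin.eq_succ_of_ne_zero (Fin.pos_iff_ne_zero.mp (lt_of_le_of_lt (Fin.zero_le q) hlt)) with
      ⟨p₀, rfl⟩
    rcases Fin.eq_zero_or_eq_succ q with hq | ⟨q₀, rfl⟩
    · subst hq
      refine conj_lift_succ_zero V (M j) p₀ ?_
      intro r
      rw [hMcol, if_neg (Fin.succ_ne_zero r)]
    · rw [conj_lift_succ_succ]
      have : q₀ < p₀ := by
        exact Fin.succ_lt_succ_iff.mp hlt
      have h4 := hVt j p₀ q₀ this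
      rw [Matrix.star_eq_conjTranspose] at h4
      exact h4
lemma eig_is_diag {n d : ℕ} (T : Fin d → Matrix (Fin n) (Fin n) ℂ)
    (hT : ∀ j p q, q < p → T j p q = 0)
    (μ : Fin d → ℂ) (v : Fin n → ℂ) (hv0 : v ≠ 0) (hv : ∀ j, T j *ᵥ v = μ j • v) :
    ∃ k, ∀ j, μ j = T j k k := by
  classical
  have hex : ∃ i, v i ≠ 0 := Function.ne_iff.mp hv0
  set s : Finset (Fin n) := Finset.univ.filter (fun i => v i ≠ 0) with hs
  have hsne : s.Nonempty := by
    obtain ⟨i, hi⟩ := hex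
    exact ⟨i, by simp [hs, hi]⟩
  set k : Fin n := s.max' hsne with hk
  have hkmem : v k ≠ 0 := by
    have := s.max'_mem hsne
    simpa [hs] using this
  have hzero : ∀ m, k < m → v m = 0 := by
    intro m hm
    by_contra hvm
    have : m ∈ s := by simp [hs, hvm]
    exact absurd (s.le_max' m this) (not_le.mpr hm)
  refine ⟨k, fun j => ?_⟩
  have h1 : (T j *ᵥ v) k = T j k k * v k := by
    show (∑ m, T j k m * v m) = T j k k * v k
    refine Finset.sum_eq_single k (fun m _ hm => ?_) (by simp)
    rcases lt_or_gt_of_ne hm with h | h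
    · rw [hT j k m h, zero_mul]
    · rw [hzero m h, mul_zero]
  have h2 : (T j *ᵥ v) k = μ j * v k := by rw [hv j]; rfl
  have := h2.symm.trans h1
  exact mul_right_cancel₀ hkmem this

lemma triang_eigen {n : ℕ} (T : Matrix (Fin n) (Fin n) ℂ)
    (hT : ∀ p q, q < p → T p q = 0) (k : Fin n) :
    ∃ v : Fin n → ℂ, v ≠ 0 ∧ T *ᵥ v = T k k • v := by
  set M : Matrix (Fin n) (Fin n) ℂ := T - T k k • 1 with hM
  have hMtr : M.BlockTriangular id := by
    intro p q h
    simp only [hM, Matrix.sub_apply, Matrix.smul_apply]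
    have hpq : p ≠ q := by
      intro hpq
      exact absurd hpq.symm (ne_of_lt h)
    rw [hT p q h, Matrix.one_apply_ne hpq]
    simp
  have hdet : M.det = 0 := by
    rw [Matrix.det_of_upperTriangular hMtr]
    refine Finset.prod_eq_zero (Finset.mem_univ k) ?_
    simp [hM, Matrix.one_apply]
  obtain ⟨v, hv0, hv⟩ := Matrix.exists_mulVec_eq_zero_iff.mpr hdet
  refine ⟨v, hv0, ?_⟩
  have : T *ᵥ v - T k k • v = 0 := by
    have h1 : M *ᵥ v = T *ᵥ v - (T k k • (1 : Matrix (Fin n) (Fin n) ℂ)) *ᵥ v :=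
      Matrix.sub_mulVec _ _ _
    rw [Matrix.smul_mulVec, Matrix.one_mulVec] at h1
    rw [← h1, hv]
  exact sub_eq_zero.mp this

lemma exists_good_t (d : ℕ) (S : Finset (Fin d → ℂ)) :
    ∃ t : ℂ, ∀ a b : Fin d → ℂ, a ∈ S → b ∈ S → a ≠ b →
      (∑ j, (a j - b j) * t ^ (j : ℕ)) ≠ 0 := by
  classical
  have hfin : (⋃ a ∈ (S : Set (Fin d → ℂ)), ⋃ b ∈ (S : Set (Fin d → ℂ)),
      {t : ℂ | a ≠ b ∧ ∑ j, (a j - b j) * t ^ (j : ℕ) = 0}).Finite := by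
    refine Set.Finite.biUnion S.finite_toSet fun a _ =>
      Set.Finite.biUnion S.finite_toSet fun b _ => ?_
    by_cases hab : a = b
    · simp [hab]
    · obtain ⟨j0, hj0⟩ := Function.ne_iff.mp hab
      set p : Polynomial ℂ := ∑ j : Fin d, Polynomial.C (a j - b j) * Polynomial.X ^ (j : ℕ)
        with hp
      have hco : p.coeff (j0 : ℕ) = a j0 - b j0 := by
        rw [hp, Polynomial.finset_sum_coeff]
        rw [Finset.sum_eq_single j0]
        · rw [Polynomial.coeff_C_mul, Polynomial.coeff_X_pow, if_pos rfl, mul_one]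
        · intro j _ hj
          rw [Polynomial.coeff_C_mul, Polynomial.coeff_X_pow,
            if_neg (fun h => hj (Fin.val_injective h).symm), mul_zero]
        · simp
      have hpne : p ≠ 0 := by
        intro h
        rw [h, Polynomial.coeff_zero] at hco
        exact hj0 (by rwa [eq_comm, sub_eq_zero] at hco)
      have hsub : {t : ℂ | a ≠ b ∧ ∑ j, (a j - b j) * t ^ (j : ℕ) = 0} ⊆ {t | p.IsRoot t} := by
        intro t ht
        have : p.eval t = ∑ j, (a j - b j) * t ^ (j : ℕ) := by
          simp [hp, Polynomial.eval_finset_sum]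
        exact (this.trans ht.2)
      exact (Polynomial.finite_setOf_isRoot hpne).subset hsub
  obtain ⟨t, ht⟩ := hfin.infinite_compl.nonempty
  refine ⟨t, fun a b ha hb hab h0 => ?_⟩
  exact ht (Set.mem_biUnion ha (Set.mem_biUnion hb ⟨hab, h0⟩))
lemma diag_is_eig {n d : ℕ} (T : Fin d → Matrix (Fin n) (Fin n) ℂ)
    (hcomm : ∀ i j, Commute (T i) (T j))
    (hT : ∀ j p q, q < p → T j p q = 0) (k : Fin n) :
    ∃ v : Fin n → ℂ, v ≠ 0 ∧ ∀ j, T j *ᵥ v = (T j k k) • v := by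
  classical
  obtain ⟨t, ht⟩ := exists_good_t d (Finset.image (fun l => fun j => T j l l) Finset.univ)
  set c : Fin d → ℂ := fun j => t ^ (j : ℕ) with hcdef
  set Cmb : Matrix (Fin n) (Fin n) ℂ := ∑ j, c j • T j with hCmb
  have hCmbT : ∀ p q, q < p → Cmb p q = 0 := by
    intro p q h
    simp [hCmb, Matrix.sum_apply, hT _ _ _ h]
  have hCmbdiag : ∀ l : Fin n, Cmb l l = ∑ j, c j * T j l l := by
    intro l
    simp [hCmb, Matrix.sum_apply]
  obtain ⟨v₀, hv₀0, hv₀⟩ := triang_eigen Cmb hCmbT k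
  set lam0 : ℂ := Cmb k k with hlam0
  set E := Module.End.eigenspace (Matrix.mulVecLin Cmb) lam0 with hE
  have hE0 : v₀ ∈ E :=
    Module.End.mem_eigenspace_iff.mpr (by simpa [Matrix.mulVecLin_apply] using hv₀)
  have hEnt : Nontrivial E := by
    refine Submodule.nontrivial_iff_ne_bot.mpr ?_
    intro h
    rw [h] at hE0
    exact hv₀0 (Submodule.mem_bot ℂ |>.mp hE0)
  have hcombcomm : ∀ j, Cmb * T j = T j * Cmb := by
    intro j
    rw [hCmb, Finset.sum_mul, Finset.mul_sum]
    congr 1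
    funext i
    rw [Matrix.smul_mul, Matrix.mul_smul, (hcomm i j).eq]
  have hmaps : ∀ j, Set.MapsTo (Matrix.mulVecLin (T j)) E E := by
    intro j w hw
    have hw' : Cmb *ᵥ w = lam0 • w := by
      have := Module.End.mem_eigenspace_iff.mp hw
      simpa [Matrix.mulVecLin_apply] using this
    refine Module.End.mem_eigenspace_iff.mpr ?_
    show Cmb *ᵥ (T j *ᵥ w) = lam0 • (T j *ᵥ w)
    rw [Matrix.mulVec_mulVec, hcombcomm j, ← Matrix.mulVec_mulVec, hw',
      Matrix.mulVec_smul]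
  obtain ⟨μ, w, hw0, hw⟩ := jointEig d E inferInstance inferInstance inferInstance hEnt
    (fun j => (Matrix.mulVecLin (T j)).restrict (hmaps j)) (by
      intro i j
      ext x
      have h := (hcomm i j).eq
      have h2 : T i *ᵥ (T j *ᵥ (x : Fin n → ℂ)) = T j *ᵥ (T i *ᵥ (x : Fin n → ℂ)) := by
        rw [Matrix.mulVec_mulVec, Matrix.mulVec_mulVec, h]
      simp only [Module.End.mul_apply, LinearMap.restrict_coe_apply, Matrix.mulVecLin_apply]
      exact congrFun h2 _)
  have hwv : ∀ j, T j *ᵥ (w : Fin n → ℂ) = μ j • (w : Fin n → ℂ) := by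
    intro j
    have := congrArg Subtype.val (hw j)
    exact this
  have hwv0 : (w : Fin n → ℂ) ≠ 0 := by
    intro h
    exact hw0 (Subtype.ext h)
  obtain ⟨l, hl⟩ := eig_is_diag T hT μ (w : Fin n → ℂ) hwv0 hwv
  -- Cmb *ᵥ w two ways
  have hCw : Cmb *ᵥ (w : Fin n → ℂ) = (∑ j, c j * μ j) • (w : Fin n → ℂ) := by
    funext p
    have lhs : (Cmb *ᵥ (w : Fin n → ℂ)) p = ∑ q, (∑ j, c j * T j p q) * (w : Fin n → ℂ) q := by
      simp [hCmb, Matrix.mulVec, dotProduct, Matrix.sum_apply]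
    have mid : ∑ q, (∑ j, c j * T j p q) * (w : Fin n → ℂ) q
        = ∑ j, c j * ((T j *ᵥ (w : Fin n → ℂ)) p) := by
      simp only [Finset.sum_mul, Matrix.mulVec, dotProduct, Finset.mul_sum]
      rw [Finset.sum_comm]
      refine Finset.sum_congr rfl fun j _ => ?_
      refine Finset.sum_congr rfl fun q _ => ?_
      ring
    rw [lhs, mid]
    simp only [hwv, Pi.smul_apply, smul_eq_mul, Finset.sum_mul]
    refine Finset.sum_congr rfl fun j _ => ?_
    ring
  have hCw' : Cmb *ᵥ (w : Fin n → ℂ) = lam0 • (w : Fin n → ℂ) := by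
    have := Module.End.mem_eigenspace_iff.mp w.2
    simpa [Matrix.mulVecLin_apply] using this
  have hsum : ∑ j, c j * μ j = lam0 := by
    have h0 : (∑ j, c j * μ j) • (w : Fin n → ℂ) = lam0 • (w : Fin n → ℂ) := by
      rw [← hCw, hCw']
    have := sub_eq_zero.mpr h0
    rw [← sub_smul] at this
    rcases smul_eq_zero.mp this with h | h
    · exact sub_eq_zero.mp h
    · exact absurd h hwv0
  have hdiag : (fun j => T j l l) = fun j => T j k k := by
    by_contra hne
    refine ht (fun j => T j l l) (fun j => T j k k)
      (Finset.mem_image.mpr ⟨l, Finset.mem_univ l, rfl⟩)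
      (Finset.mem_image.mpr ⟨k, Finset.mem_univ k, rfl⟩) hne ?_
    have : ∑ j, (T j l l - T j k k) * t ^ (j : ℕ)
        = (∑ j, c j * μ j) - Cmb k k := by
      rw [hCmbdiag k, ← Finset.sum_sub_distrib]
      congr 1
      funext j
      rw [hl j, hcdef]
      ring
    rw [this, hsum, hlam0, sub_self]
  refine ⟨(w : Fin n → ℂ), hwv0, fun j => ?_⟩
  rw [hwv j, hl j, congrFun hdiag j]
lemma conj_mul_conj {N : ℕ} (U X Y : Matrix (Fin N) (Fin N) ℂ) (hUr : U * star U = 1) :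
    (star U * X * U) * (star U * Y * U) = star U * (X * Y) * U := by
  have h1 : U * (star U * (Y * U)) = Y * U := by
    rw [← Matrix.mul_assoc, hUr, Matrix.one_mul]
  simp only [Matrix.mul_assoc]
  rw [h1]

lemma tendsto_conj_entry {N : ℕ} (Useq : ℕ → Matrix (Fin N) (Fin N) ℂ)
    (Aseq : ℕ → Matrix (Fin N) (Fin N) ℂ) (U B : Matrix (Fin N) (Fin N) ℂ)
    (hU : ∀ i j, Tendsto (fun k => Useq k i j) atTop (𝓝 (U i j)))
    (hA : ∀ i j, Tendsto (fun k => Aseq k i j) atTop (𝓝 (B i j))) (i j : Fin N) :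
    Tendsto (fun k => (star (Useq k) * Aseq k * Useq k) i j) atTop
      (𝓝 ((star U * B * U) i j)) := by
  have key : ∀ X Y : Matrix (Fin N) (Fin N) ℂ,
      (star X * Y * X) i j = ∑ s, (∑ r, star (X r i) * Y r s) * X s j := by
    intro X Y
    simp [Matrix.mul_apply, Matrix.star_apply, Finset.sum_mul]
  rw [key]
  refine Tendsto.congr (fun k => (key (Useq k) (Aseq k)).symm) ?_
  refine tendsto_finset_sum _ fun s _ => Tendsto.mul ?_ (hU s j)
  exact tendsto_finset_sum _ fun r _ => Tendsto.mul ((hU r i).star) (hA r s)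

/-- Continuity of joint eigenvalues for converging sequences of commuting
matrix tuples. -/
theorem stmt_0 (d N : ℕ)
    (A : ℕ → Fin d → Matrix (Fin N) (Fin N) ℂ)
    (B : Fin d → Matrix (Fin N) (Fin N) ℂ)
    (hAcomm : ∀ n i j, Commute (A n i) (A n j))
    (hBcomm : ∀ i j, Commute (B i) (B j))
    (hconv : ∀ j i₁ i₂, Tendsto (fun n => A n j i₁ i₂) atTop (𝓝 (B j i₁ i₂)))
    (lam : Fin d → ℂ)
    (hlam : ∃ v : Fin N → ℂ, v ≠ 0 ∧ ∀ j, B j *ᵥ v = lam j • v) :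
    ∃ n : ℕ → ℕ, StrictMono n ∧
      ∃ mu : ℕ → Fin d → ℂ,
        (∀ k, ∃ v : Fin N → ℂ, v ≠ 0 ∧ ∀ j, A (n k) j *ᵥ v = mu k j • v) ∧
        ∀ j, Tendsto (fun k => mu k j) atTop (𝓝 (lam j)) := by
  classical
  obtain ⟨v, hv0, hveig⟩ := hlam
  choose U hU1 hU2 hU3 using fun m => simTriang N d (A m) (hAcomm m)
  -- the set of unitary-like matrices with entries in the closed unit ball is compact
  set K : Set (Matrix (Fin N) (Fin N) ℂ) :=
    {W | ∀ i j, W i j ∈ Metric.closedBall (0 : ℂ) 1} with hKdef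
  have hKcomp : IsCompact K := by
    have h0 : IsCompact (Set.univ.pi fun _ : Fin N => Set.univ.pi fun _ : Fin N =>
        Metric.closedBall (0 : ℂ) 1) :=
      isCompact_univ_pi fun _ => isCompact_univ_pi fun _ => isCompact_closedBall _ _
    have hEq : K = (Set.univ.pi fun _ : Fin N => Set.univ.pi fun _ : Fin N =>
        Metric.closedBall (0 : ℂ) 1) := by
      ext W
      constructor
      · intro h
        exact fun i _ => fun j _ => h i j
      · intro h i j
        exact h i (Set.mem_univ i) j (Set.mem_univ j)
    rw [hEq]
    exact h0
  set S : Set (Matrix (Fin N) (Fin N) ℂ) :=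
    K ∩ ({W | star W * W = 1} ∩ {W | W * star W = 1}) with hSdef
  have hScomp : IsCompact S := by
    refine hKcomp.inter_right (IsClosed.inter ?_ ?_)
    · exact isClosed_eq (continuous_star.matrix_mul continuous_id) continuous_const
    · exact isClosed_eq (continuous_id.matrix_mul continuous_star) continuous_const
  have hUmem : ∀ m, U m ∈ S := by
    intro m
    refine ⟨?_, hU1 m, hU2 m⟩
    intro i j
    -- column norms are 1
    have hcol : ∑ r, ((Complex.normSq (U m r j) : ℝ) : ℂ) = 1 := by
      have h1 : (star (U m) * U m) j j = 1 := by
        rw [hU1 m, Matrix.one_apply_eq]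
      rw [← h1]
      simp only [Matrix.mul_apply, Matrix.star_apply]
      refine Finset.sum_congr rfl fun r _ => ?_
      rw [Complex.star_def, Complex.normSq_eq_conj_mul_self]
    have hcolR : ∑ r, Complex.normSq (U m r j) = 1 := by
      have := hcol
      rw [← Complex.ofReal_sum] at this
      exact_mod_cast this
    have hle : Complex.normSq (U m i j) ≤ 1 := by
      rw [← hcolR]
      exact Finset.single_le_sum (f := fun r => Complex.normSq (U m r j))
        (fun r _ => Complex.normSq_nonneg _) (Finset.mem_univ i)
    rw [Metric.mem_closedBall, dist_zero_right]
    have h2 : ‖U m i j‖ ^ 2 ≤ 1 := by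
      rw [← Complex.sq_norm] at hle
      simpa using hle
    nlinarith [norm_nonneg (U m i j)]
  obtain ⟨L, hLS, φ, hφmono, hφtendsto⟩ := by
    haveI : FirstCountableTopology (Matrix (Fin N) (Fin N) ℂ) :=
      inferInstanceAs (FirstCountableTopology (Fin N → Fin N → ℂ))
    exact hScomp.tendsto_subseq hUmem
  obtain ⟨hLK, hL1, hL2⟩ := hLS
  -- entrywise convergence of the unitaries along φ
  have hUe : ∀ i j, Tendsto (fun k => U (φ k) i j) atTop (𝓝 (L i j)) := by
    intro i j
    have hcont : Continuous fun W : Matrix (Fin N) (Fin N) ℂ => W i j :=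
      continuous_id.matrix_elem i j
    have := (hcont.tendsto L).comp hφtendsto
    exact this
  have hAe : ∀ j i₁ i₂, Tendsto (fun k => A (φ k) j i₁ i₂) atTop (𝓝 (B j i₁ i₂)) := by
    intro j i₁ i₂
    exact (hconv j i₁ i₂).comp hφmono.tendsto_atTop
  -- the limiting triangular tuple
  set T : Fin d → Matrix (Fin N) (Fin N) ℂ := fun j => star L * B j * L with hTdef
  have hTlim : ∀ j p q, Tendsto (fun k => (star (U (φ k)) * A (φ k) j * U (φ k)) p q)
      atTop (𝓝 (T j p q)) := by
    intro j p q
    exact tendsto_conj_entry _ _ _ _ hUe (hAe j) p q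
  have hTtri : ∀ j p q, q < p → T j p q = 0 := by
    intro j p q hlt
    refine tendsto_nhds_unique (hTlim j p q) ?_
    have : ∀ k, (star (U (φ k)) * A (φ k) j * U (φ k)) p q = 0 := fun k =>
      hU3 (φ k) j p q hlt
    simpa [this] using tendsto_const_nhds (α := ℂ) (f := atTop)
  -- lam appears on the diagonal of T
  have hw : ∀ j, T j *ᵥ (star L *ᵥ v) = lam j • (star L *ᵥ v) := by
    intro j
    have hassoc : star L * B j * L * star L = star L * B j := by
      rw [Matrix.mul_assoc (star L * B j) L (star L), hL2, Matrix.mul_one]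
    rw [hTdef]
    show (star L * B j * L) *ᵥ (star L *ᵥ v) = _
    rw [Matrix.mulVec_mulVec, hassoc, ← Matrix.mulVec_mulVec, hveig j, Matrix.mulVec_smul]
  have hw0 : star L *ᵥ v ≠ 0 := by
    intro h
    have : L *ᵥ (star L *ᵥ v) = v := by
      rw [Matrix.mulVec_mulVec, hL2, Matrix.one_mulVec]
    rw [h, Matrix.mulVec_zero] at this
    exact hv0 this.symm
  obtain ⟨k₀, hk₀⟩ := eig_is_diag T hTtri lam (star L *ᵥ v) hw0 hw
  -- define the subsequence and the eigenvalue tuples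
  refine ⟨φ, hφmono, fun k j => (star (U (φ k)) * A (φ k) j * U (φ k)) k₀ k₀, ?_, ?_⟩
  · intro k
    set M : Fin d → Matrix (Fin N) (Fin N) ℂ :=
      fun j => star (U (φ k)) * A (φ k) j * U (φ k) with hMdef
    have hMcomm : ∀ i j, Commute (M i) (M j) := by
      intro i j
      show M i * M j = M j * M i
      rw [hMdef]
      rw [conj_mul_conj _ _ _ (hU2 (φ k)), conj_mul_conj _ _ _ (hU2 (φ k)),
        (hAcomm (φ k) i j).eq]
    have hMtri : ∀ j p q, q < p → M j p q = 0 := fun j p q hlt => hU3 (φ k) j p q hlt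
    obtain ⟨w, hw0', hweig⟩ := diag_is_eig M hMcomm hMtri k₀
    refine ⟨U (φ k) *ᵥ w, ?_, ?_⟩
    · intro h
      have : star (U (φ k)) *ᵥ (U (φ k) *ᵥ w) = w := by
        rw [Matrix.mulVec_mulVec, hU1 (φ k), Matrix.one_mulVec]
      rw [h, Matrix.mulVec_zero] at this
      exact hw0' this.symm
    · intro j
      have hUM : U (φ k) * M j = A (φ k) j * U (φ k) := by
        rw [hMdef]
        have : U (φ k) * (star (U (φ k)) * (A (φ k) j * U (φ k)))
            = A (φ k) j * U (φ k) := by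
          rw [← Matrix.mul_assoc, hU2 (φ k), Matrix.one_mul]
        simp only [Matrix.mul_assoc]
        exact this
      calc A (φ k) j *ᵥ (U (φ k) *ᵥ w) = (A (φ k) j * U (φ k)) *ᵥ w := by
            rw [Matrix.mulVec_mulVec]
        _ = (U (φ k) * M j) *ᵥ w := by rw [hUM]
        _ = U (φ k) *ᵥ (M j *ᵥ w) := by rw [Matrix.mulVec_mulVec]
        _ = U (φ k) *ᵥ (M j k₀ k₀ • w) := by rw [hweig j]
        _ = M j k₀ k₀ • (U (φ k) *ᵥ w) := Matrix.mulVec_smul _ _ _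
  · intro j
    have := hTlim j k₀ k₀
    rw [← hk₀ j] at this
    exact this
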